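/- arXiv:1805.12026 — 4 statements merged into one kernel-verified Lean document; each statement's English description precedes it below -/
import Mathlib

section
/- Let A ⊆ ℝⁿ be closed and nonempty, let x ∈ ℝⁿ, and let f(t) = arctan(‖t‖) · (t / ‖t‖) (with f(0) = 0). Define H = f(A − x) ∪ sphere(0, π/2), where A − x = {a − x : a ∈ A}. Then H is a compact subset of the closed ball of radius π/2, and the projection points of 0 onto H are exactly the points of the form f(t − x) where t is a projection point of x onto A. -/
open Classical in
noncomputable def arctanMap (n : ℕ) (t : EuclideanSpace ℝ (Fin n)) : EuclideanSpace ℝ (Fin n) :=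
  if t = 0 then 0 else Real.arctan ‖t‖ • (‖t‖⁻¹ • t)

lemma arctan_nonneg' {r : ℝ} (hr : 0 ≤ r) : 0 ≤ Real.arctan r := by
  have := Real.arctan_strictMono.monotone hr
  rwa [Real.arctan_zero] at this

lemma norm_arctanMap (n : ℕ) (t : EuclideanSpace ℝ (Fin n)) :
    ‖arctanMap n t‖ = Real.arctan ‖t‖ := by
  unfold arctanMap
  split_ifs with h
  · simp [h]
  · rw [norm_smul, norm_smul, norm_inv, norm_norm, Real.norm_eq_abs,
      inv_mul_cancel₀ (norm_ne_zero_iff.2 h), mul_one,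
      abs_of_nonneg (arctan_nonneg' (norm_nonneg t))]

lemma arctanMap_continuousAt (n : ℕ) {t : EuclideanSpace ℝ (Fin n)} (ht : t ≠ 0) :
    ContinuousAt (arctanMap n) t := by
  have hev : (fun s : EuclideanSpace ℝ (Fin n) => Real.arctan ‖s‖ • (‖s‖⁻¹ • s))
      =ᶠ[nhds t] arctanMap n := by
    filter_upwards [eventually_ne_nhds ht] with s hs
    simp [arctanMap, hs]
  have h1 : ContinuousAt (fun s : EuclideanSpace ℝ (Fin n) => Real.arctan ‖s‖) t :=
    (Real.continuous_arctan.comp continuous_norm).continuousAt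
  have h2 : ContinuousAt (fun s : EuclideanSpace ℝ (Fin n) => ‖s‖⁻¹ • s) t :=
    ContinuousAt.smul (continuous_norm.continuousAt.inv₀ (norm_ne_zero_iff.2 ht))
      continuousAt_id
  exact (h1.smul h2).congr hev

theorem arctanMap_projection (n : ℕ) (A : Set (EuclideanSpace ℝ (Fin n)))
    (hAc : IsClosed A) (hA : A.Nonempty) (x : EuclideanSpace ℝ (Fin n)) :
    let H := arctanMap n '' ((fun a => a - x) '' A) ∪
      Metric.sphere (0 : EuclideanSpace ℝ (Fin n)) (Real.pi / 2)
    IsCompact H ∧ H ⊆ Metric.closedBall 0 (Real.pi / 2) ∧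
    {y | y ∈ H ∧ dist 0 y = Metric.infDist 0 H} =
      (fun t => arctanMap n (t - x)) '' {t | t ∈ A ∧ dist x t = Metric.infDist x A} := by
  intro H
  set B : Set (EuclideanSpace ℝ (Fin n)) := (fun a => a - x) '' A with hB
  have hBc : IsClosed B := by
    have : B = (fun b => b + x) ⁻¹' A := by
      ext b
      constructor
      · rintro ⟨a, ha, rfl⟩
        simpa using ha
      · intro hb
        exact ⟨b + x, hb, by simp⟩
    rw [this]
    exact hAc.preimage (continuous_id.add continuous_const)
  set d := Metric.infDist x A with hd
  obtain ⟨t₀, ht₀A, ht₀d⟩ := hAc.exists_infDist_eq_dist hA x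
  have hdn : 0 ≤ d := Metric.infDist_nonneg
  -- distance computations
  have hdist0 : ∀ z : EuclideanSpace ℝ (Fin n), dist (0 : EuclideanSpace ℝ (Fin n)) z = ‖z‖ := by
    intro z; rw [dist_eq_norm, zero_sub, norm_neg]
  have hdistxa : ∀ a : EuclideanSpace ℝ (Fin n), dist x a = ‖a - x‖ := by
    intro a; rw [dist_eq_norm, norm_sub_rev]
  -- H is contained in the closed ball
  have hHsub : H ⊆ Metric.closedBall 0 (Real.pi / 2) := by
    rintro y (⟨t, _, rfl⟩ | hy)
    · rw [Metric.mem_closedBall, dist_comm, hdist0, norm_arctanMap]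
      exact (Real.arctan_lt_pi_div_two _).le
    · rw [Metric.mem_closedBall, dist_comm, hdist0]
      rw [mem_sphere_zero_iff_norm] at hy
      exact hy.le
  -- H is nonempty
  have hHne : H.Nonempty := ⟨arctanMap n (t₀ - x), Or.inl ⟨t₀ - x, ⟨t₀, ht₀A, rfl⟩, rfl⟩⟩
  -- infDist 0 H = arctan d
  have hmem₀ : arctanMap n (t₀ - x) ∈ H := Or.inl ⟨t₀ - x, ⟨t₀, ht₀A, rfl⟩, rfl⟩
  have hlow : ∀ y ∈ H, Real.arctan d ≤ dist 0 y := by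
    rintro y (⟨t, ⟨a, haA, rfl⟩, rfl⟩ | hy)
    · rw [hdist0, norm_arctanMap]
      apply Real.arctan_strictMono.monotone
      rw [← hdistxa]
      exact Metric.infDist_le_dist_of_mem haA
    · rw [hdist0, mem_sphere_zero_iff_norm.1 hy]
      exact (Real.arctan_lt_pi_div_two d).le
  have hInf : Metric.infDist 0 H = Real.arctan d := by
    apply le_antisymm
    · have := Metric.infDist_le_dist_of_mem (x := (0 : EuclideanSpace ℝ (Fin n))) hmem₀
      rwa [hdist0, norm_arctanMap, ← hdistxa, ← ht₀d] at this
    · by_contra h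
      push_neg at h
      obtain ⟨y, hyH, hyd⟩ := (Metric.infDist_lt_iff hHne).1 h
      exact absurd (hlow y hyH) (not_le.2 hyd)
  -- closedness of H
  have hHclosed : IsClosed H := by
    apply IsSeqClosed.isClosed
    intro u y hu hlim
    by_cases hy : ‖y‖ = Real.pi / 2
    · exact Or.inr (mem_sphere_zero_iff_norm.2 hy)
    have hnlim : Filter.Tendsto (fun k => ‖u k‖) Filter.atTop (nhds ‖y‖) :=
      (continuous_norm.continuousAt.tendsto).comp hlim
    by_cases hfreq : ∃ᶠ k in Filter.atTop, u k ∈ arctanMap n '' B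
    · -- extract subsequence in the image
      obtain ⟨φ, hφ, hφmem⟩ := Filter.extraction_of_frequently_atTop hfreq
      have hlimφ : Filter.Tendsto (u ∘ φ) Filter.atTop (nhds y) :=
        hlim.comp (hφ.tendsto_atTop)
      choose t htB htf using hφmem
      have hylt : ‖y‖ < Real.pi / 2 := by
        have : y ∈ Metric.closedBall (0 : EuclideanSpace ℝ (Fin n)) (Real.pi / 2) :=
          Metric.isClosed_closedBall.mem_of_tendsto hlim
            (Filter.Eventually.of_forall fun k => hHsub (hu k))
        rw [Metric.mem_closedBall, dist_comm, hdist0] at this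
        exact lt_of_le_of_ne this hy
      have hcos : Real.cos ‖y‖ ≠ 0 := by
        apply ne_of_gt
        apply Real.cos_pos_of_mem_Ioo
        constructor
        · linarith [norm_nonneg y, Real.pi_pos]
        · exact hylt
      have htan : Filter.Tendsto (fun k => Real.tan ‖u (φ k)‖) Filter.atTop
          (nhds (Real.tan ‖y‖)) := by
        have h1 : Filter.Tendsto (fun k => ‖u (φ k)‖) Filter.atTop (nhds ‖y‖) :=
          (continuous_norm.continuousAt.tendsto).comp hlimφ
        exact (Real.continuousAt_tan.2 hcos).tendsto.comp h1
      have hnt : ∀ k, ‖t k‖ = Real.tan ‖u (φ k)‖ := by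
        intro k
        rw [← htf k, norm_arctanMap, Real.tan_arctan]
      have httan : Filter.Tendsto (fun k => ‖t k‖) Filter.atTop (nhds (Real.tan ‖y‖)) := by
        simpa only [← hnt] using htan
      have hev : ∀ᶠ k in Filter.atTop, t k ∈ B ∩ Metric.closedBall 0 (Real.tan ‖y‖ + 1) := by
        filter_upwards [httan.eventually (eventually_le_nhds (lt_add_one (Real.tan ‖y‖)))]
          with k hk
        exact ⟨htB k, by rwa [Metric.mem_closedBall, dist_comm, hdist0]⟩
      have hScomp : IsCompact (B ∩ Metric.closedBall 0 (Real.tan ‖y‖ + 1)) :=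
        (isCompact_closedBall _ _).inter_left hBc
      obtain ⟨tlim, htlimS, ψ, hψ, hψlim⟩ := hScomp.tendsto_subseq' hev.frequently
      have hfψlim : Filter.Tendsto (fun j => arctanMap n (t (ψ j))) Filter.atTop (nhds y) := by
        have : (fun j => arctanMap n (t (ψ j))) = u ∘ φ ∘ ψ := by
          funext j; exact htf (ψ j)
        rw [this]
        exact hlimφ.comp hψ.tendsto_atTop
      by_cases htlim : tlim = 0
      · -- then tan ‖y‖ = 0, so y = 0 = arctanMap 0
        have h0 : Filter.Tendsto (fun j => ‖t (ψ j)‖) Filter.atTop (nhds (Real.tan ‖y‖)) :=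
          httan.comp hψ.tendsto_atTop
        have h0' : Filter.Tendsto (fun j => ‖t (ψ j)‖) Filter.atTop (nhds 0) := by
          have := (continuous_norm.continuousAt.tendsto).comp hψlim
          simpa [htlim, Function.comp_def] using this
        have htan0 : Real.tan ‖y‖ = 0 := tendsto_nhds_unique h0 h0'
        have hy0 : ‖y‖ = 0 := by
          have := Real.arctan_tan (x := ‖y‖)
            (by linarith [norm_nonneg y, Real.pi_pos]) hylt
          rw [htan0, Real.arctan_zero] at this
          exact this.symm
        have hyz : y = 0 := norm_eq_zero.1 hy0
        left
        refine ⟨tlim, htlimS.1, ?_⟩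
        rw [htlim, hyz]
        simp [arctanMap]
      · have hcont := (arctanMap_continuousAt n htlim).tendsto.comp hψlim
        have : y = arctanMap n tlim := tendsto_nhds_unique hfψlim (by simpa [Function.comp_def] using hcont)
        exact Or.inl ⟨tlim, htlimS.1, this.symm⟩
    · -- eventually on the sphere
      rw [Filter.not_frequently] at hfreq
      have hev : ∀ᶠ k in Filter.atTop, ‖u k‖ = Real.pi / 2 := by
        filter_upwards [hfreq] with k hk
        rcases hu k with h | h
        · exact absurd h hk
        · exact mem_sphere_zero_iff_norm.1 h
      have : Filter.Tendsto (fun k => ‖u k‖) Filter.atTop (nhds (Real.pi / 2)) :=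
        Filter.Tendsto.congr' (Filter.EventuallyEq.symm hev) tendsto_const_nhds
      exact absurd (tendsto_nhds_unique hnlim this) hy
  refine ⟨?_, hHsub, ?_⟩
  · exact Metric.isCompact_of_isClosed_isBounded hHclosed
      (Metric.isBounded_closedBall.subset hHsub)
  · ext y
    simp only [Set.mem_setOf_eq, Set.mem_image]
    constructor
    · rintro ⟨hyH, hyd⟩
      rw [hInf] at hyd
      rcases hyH with ⟨t, ⟨a, haA, rfl⟩, rfl⟩ | hy
      · rw [hdist0, norm_arctanMap] at hyd
        have : ‖a - x‖ = d := Real.arctan_injective hyd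
        exact ⟨a, ⟨haA, by rw [hdistxa, this]⟩, rfl⟩
      · rw [hdist0, mem_sphere_zero_iff_norm.1 hy] at hyd
        exact absurd hyd.symm (ne_of_lt (Real.arctan_lt_pi_div_two d))
    · rintro ⟨t, ⟨htA, htd⟩, rfl⟩
      refine ⟨Or.inl ⟨t - x, ⟨t, htA, rfl⟩, rfl⟩, ?_⟩
      rw [hdist0, norm_arctanMap, ← hdistxa, htd, hInf]
end

section
/- Let (a_n) be a bounded sequence of real numbers, and define b_n ∈ ℝ² in polar coordinates by b_n = ((1 + 2^(−n)) cos(arctan a_n), (1 + 2^(−n)) sin(arctan a_n)). Let A be the closure of {b_n : n ∈ ℕ}. Then infDist(0, A) = 1, and a point p ∈ A satisfies ‖p‖ = 1 if and only if p = (cos(arctan c), sin(arctan c)) for some cluster point c of the sequence (a_n). In particular, every projection point of 0 onto A yields a cluster point of (a_n). -/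
open Real Filter

private noncomputable def Vpt (u v : ℝ) : EuclideanSpace ℝ (Fin 2) :=
  (WithLp.equiv 2 (Fin 2 → ℝ)).symm ![u, v]

private lemma norm_Vpt (u v : ℝ) : ‖Vpt u v‖ = Real.sqrt (u ^ 2 + v ^ 2) := by
  rw [EuclideanSpace.norm_eq]
  simp [Vpt, Fin.sum_univ_two, Real.norm_eq_abs, sq_abs]

private lemma norm_Vpt_polar (t θ : ℝ) (ht : 0 ≤ t) :
    ‖Vpt ((1 + t) * Real.cos θ) ((1 + t) * Real.sin θ)‖ = 1 + t := by
  rw [norm_Vpt]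
  have : ((1 + t) * Real.cos θ) ^ 2 + ((1 + t) * Real.sin θ) ^ 2 = (1 + t) ^ 2 := by
    have := Real.sin_sq_add_cos_sq θ
    ring_nf
    nlinarith [Real.sin_sq_add_cos_sq θ]
  rw [this, Real.sqrt_sq (by linarith)]

private lemma tendsto_Vpt {x y : ℕ → ℝ} {u v : ℝ}
    (hx : Tendsto x atTop (nhds u)) (hy : Tendsto y atTop (nhds v)) :
    Tendsto (fun n => Vpt (x n) (y n)) atTop (nhds (Vpt u v)) := by
  have hcont : Continuous fun w : Fin 2 → ℝ => (WithLp.equiv 2 (Fin 2 → ℝ)).symm w :=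
    PiLp.continuous_toLp 2 _
  have h : Tendsto (fun n => (![x n, y n] : Fin 2 → ℝ)) atTop (nhds ![u, v]) := by
    rw [tendsto_pi_nhds]
    intro i
    fin_cases i <;> simpa
  exact (hcont.tendsto _).comp h

open Real in
theorem bwt_via_projection (a : ℕ → ℝ) (hbdd : ∃ M, ∀ n, |a n| ≤ M) :
    let vec : ℝ → ℝ → EuclideanSpace ℝ (Fin 2) := fun u v =>
      (WithLp.equiv 2 (Fin 2 → ℝ)).symm ![u, v]
    let b : ℕ → EuclideanSpace ℝ (Fin 2) := fun n =>
      vec ((1 + (2 : ℝ)^(-(n : ℤ))) * cos (arctan (a n)))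
          ((1 + (2 : ℝ)^(-(n : ℤ))) * sin (arctan (a n)))
    let A := closure (Set.range b)
    Metric.infDist (0 : EuclideanSpace ℝ (Fin 2)) A = 1 ∧
    ∀ p ∈ A, (‖p‖ = 1 ↔
      ∃ c : ℝ, MapClusterPt c Filter.atTop a ∧ p = vec (cos (arctan c)) (sin (arctan c))) := by
  intro vec b A
  have hvec : vec = Vpt := rfl
  have hb : ∀ n : ℕ, b n = Vpt ((1 + (2 : ℝ)^(-(n : ℤ))) * cos (arctan (a n)))
      ((1 + (2 : ℝ)^(-(n : ℤ))) * sin (arctan (a n))) := fun n => rfl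
  have htpos : ∀ n : ℕ, (0 : ℝ) < (2 : ℝ)^(-(n : ℤ)) := fun n => by positivity
  have hnormb : ∀ n : ℕ, ‖b n‖ = 1 + (2 : ℝ)^(-(n : ℤ)) := fun n => by
    rw [hb n, norm_Vpt_polar _ _ (htpos n).le]
  have htend0 : Tendsto (fun n : ℕ => (2 : ℝ)^(-(n : ℤ))) atTop (nhds 0) := by
    have h := tendsto_pow_atTop_nhds_zero_of_lt_one
      (by norm_num : (0:ℝ) ≤ 1/2) (by norm_num : (1:ℝ)/2 < 1)
    refine h.congr fun n => ?_
    rw [zpow_neg, zpow_natCast, one_div, inv_pow]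
  constructor
  · rw [show A = closure (Set.range b) from rfl, Metric.infDist_closure]
    have hne : (Set.range b).Nonempty := Set.range_nonempty b
    apply le_antisymm
    · have h1 : Tendsto (fun n : ℕ => 1 + (2 : ℝ)^(-(n : ℤ))) atTop (nhds 1) := by
        simpa using htend0.const_add 1
      refine ge_of_tendsto' h1 fun n => ?_
      have := Metric.infDist_le_dist_of_mem (x := (0 : EuclideanSpace ℝ (Fin 2))) (Set.mem_range_self (f := b) n)
      rwa [dist_zero_left, hnormb n] at this
    · by_contra hlt
      push_neg at hlt
      obtain ⟨y, ⟨n, rfl⟩, hy⟩ := (Metric.infDist_lt_iff hne).mp hlt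
      rw [dist_zero_left, hnormb n] at hy
      linarith [htpos n]
  · intro p hp
    constructor
    · intro hnp
      obtain ⟨g, hg, hgp⟩ := mem_closure_iff_seq_limit.mp hp
      choose f hf using hg
      have hbf : Tendsto (fun k => b (f k)) atTop (nhds p) := by
        simpa [fun k => hf k] using hgp
      have hnorm : Tendsto (fun k => ‖b (f k)‖) atTop (nhds 1) := by
        rw [← hnp]
        exact (continuous_norm.tendsto p).comp hbf
      have ht0 : Tendsto (fun k => (2 : ℝ)^(-(f k : ℤ))) atTop (nhds 0) := by
        have := hnorm.sub_const 1
        simp only [hnormb] at this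
        simpa using this
      have hftop : Tendsto f atTop atTop := by
        rw [tendsto_atTop]
        intro N
        have hev : ∀ᶠ k in atTop, (2 : ℝ)^(-(f k : ℤ)) < (2 : ℝ)^(-(N : ℤ)) :=
          ht0.eventually (gt_mem_nhds (by positivity))
        filter_upwards [hev] with k hk
        have : -(f k : ℤ) < -(N : ℤ) := by
          rwa [← zpow_lt_zpow_iff_right₀ (by norm_num : (1 : ℝ) < 2)]
        omega
      obtain ⟨M, hM⟩ := hbdd
      obtain ⟨c, -, φ, hφ, hac⟩ := tendsto_subseq_of_bounded (Metric.isBounded_Icc (-M) M)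
        (x := fun k => a (f k)) (fun k => abs_le.mp (hM (f k)))
      refine ⟨c, ?_, ?_⟩
      · exact MapClusterPt.of_comp (hftop.comp hφ.tendsto_atTop) hac.mapClusterPt
      · have h1 : Tendsto (fun j => b (f (φ j))) atTop (nhds p) :=
          hbf.comp hφ.tendsto_atTop
        have harctan : Tendsto (fun j => arctan (a (f (φ j)))) atTop (nhds (arctan c)) :=
          (Real.continuous_arctan.tendsto c).comp hac
        have hcoef : Tendsto (fun j => 1 + (2 : ℝ)^(-(f (φ j) : ℤ))) atTop (nhds 1) := by
          simpa using (ht0.comp hφ.tendsto_atTop).const_add 1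
        have h2 : Tendsto (fun j => b (f (φ j))) atTop
            (nhds (Vpt (cos (arctan c)) (sin (arctan c)))) := by
          simp only [hb]
          have hx : Tendsto (fun j => (1 + (2 : ℝ)^(-(f (φ j) : ℤ))) * cos (arctan (a (f (φ j)))))
              atTop (nhds (cos (arctan c))) := by
            simpa using hcoef.mul ((Real.continuous_cos.tendsto _).comp harctan)
          have hy : Tendsto (fun j => (1 + (2 : ℝ)^(-(f (φ j) : ℤ))) * sin (arctan (a (f (φ j)))))
              atTop (nhds (sin (arctan c))) := by
            simpa using hcoef.mul ((Real.continuous_sin.tendsto _).comp harctan)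
          exact tendsto_Vpt hx hy
        rw [hvec]
        exact tendsto_nhds_unique h1 h2
    · rintro ⟨c, -, rfl⟩
      rw [hvec, norm_Vpt]
      rw [show cos (arctan c) ^ 2 + sin (arctan c) ^ 2 = 1 by
        rw [add_comm]; exact Real.sin_sq_add_cos_sq _]
      exact Real.sqrt_one
end

section
/- Let A ⊆ [0,1] be closed and nonempty, with [0,1] \ A = ⋃_n I_n for a sequence of open intervals I_n ⊆ ℝ. Define K ⊆ ℝ² (in polar coordinates) as the set of points (r cos α, r sin α) with 1 ≤ r ≤ 2, 0 ≤ α ≤ 1, and for all n, α ∈ I_n implies r ≥ 1 + 2^(−n+1). Then K is closed, infDist(0, K) = 1, and the points of K at distance exactly 1 from the origin are precisely {(cos α, sin α) : α ∈ A}. -/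
open Real in
lemma dist_vec_aux (r α : ℝ) (hr : 0 ≤ r) :
    dist (0 : EuclideanSpace ℝ (Fin 2))
      ((WithLp.equiv 2 (Fin 2 → ℝ)).symm ![r * cos α, r * sin α]) = r := by
  rw [dist_comm, dist_zero_right, EuclideanSpace.norm_eq]
  simp only [WithLp.equiv_symm_apply, PiLp.toLp_apply, Fin.sum_univ_two, Matrix.cons_val_zero,
    Matrix.cons_val_one, Matrix.head_cons, Real.norm_eq_abs, sq_abs]
  have : (r * cos α) ^ 2 + (r * sin α) ^ 2 = r ^ 2 := by
    have := sin_sq_add_cos_sq α; nlinarith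
  rw [this, Real.sqrt_sq hr]

open Real in
theorem whitney_circle_construction (I : ℕ → Set ℝ)
    (hI : ∀ n, ∃ a b : ℝ, I n = Set.Ioo a b)
    (hA : (Set.Icc (0 : ℝ) 1 \ ⋃ n, I n).Nonempty) :
    let vec : ℝ → ℝ → EuclideanSpace ℝ (Fin 2) := fun u v =>
      (WithLp.equiv 2 (Fin 2 → ℝ)).symm ![u, v]
    let A : Set ℝ := Set.Icc 0 1 \ ⋃ n, I n
    let K : Set (EuclideanSpace ℝ (Fin 2)) :=
      {p | ∃ r α : ℝ, 1 ≤ r ∧ r ≤ 2 ∧ 0 ≤ α ∧ α ≤ 1 ∧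
        (∀ n : ℕ, α ∈ I n → 1 + (2 : ℝ)^(-(n : ℤ) + 1) ≤ r) ∧
        p = vec (r * cos α) (r * sin α)}
    IsClosed K ∧ Metric.infDist (0 : EuclideanSpace ℝ (Fin 2)) K = 1 ∧
    {p | p ∈ K ∧ dist (0 : EuclideanSpace ℝ (Fin 2)) p = 1} =
      (fun α => vec (cos α) (sin α)) '' A := by
  intro vec A K
  -- the parameter set
  set S : Set (ℝ × ℝ) := {q | 1 ≤ q.1 ∧ q.1 ≤ 2 ∧ 0 ≤ q.2 ∧ q.2 ≤ 1 ∧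
    ∀ n : ℕ, q.2 ∈ I n → 1 + (2 : ℝ)^(-(n : ℤ) + 1) ≤ q.1} with hS
  have hIopen : ∀ n, IsOpen (I n) := by
    intro n; obtain ⟨a, b, hab⟩ := hI n; rw [hab]; exact isOpen_Ioo
  have hSclosed : IsClosed S := by
    have h1 : IsClosed {q : ℝ × ℝ | 1 ≤ q.1} := isClosed_le continuous_const continuous_fst
    have h2 : IsClosed {q : ℝ × ℝ | q.1 ≤ 2} := isClosed_le continuous_fst continuous_const
    have h3 : IsClosed {q : ℝ × ℝ | 0 ≤ q.2} := isClosed_le continuous_const continuous_snd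
    have h4 : IsClosed {q : ℝ × ℝ | q.2 ≤ 1} := isClosed_le continuous_snd continuous_const
    have h5 : IsClosed {q : ℝ × ℝ | ∀ n : ℕ, q.2 ∈ I n → 1 + (2 : ℝ)^(-(n : ℤ) + 1) ≤ q.1} := by
      have : {q : ℝ × ℝ | ∀ n : ℕ, q.2 ∈ I n → 1 + (2 : ℝ)^(-(n : ℤ) + 1) ≤ q.1} =
          ⋂ n : ℕ, ({q : ℝ × ℝ | q.2 ∉ I n} ∪ {q | 1 + (2 : ℝ)^(-(n : ℤ) + 1) ≤ q.1}) := by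
        ext q; simp only [Set.mem_setOf_eq, Set.mem_iInter, Set.mem_union]
        constructor
        · intro h n
          by_cases hq : q.2 ∈ I n
          · exact Or.inr (h n hq)
          · exact Or.inl hq
        · intro h n hq
          rcases h n with h' | h'
          · exact absurd hq h'
          · exact h'
      rw [this]
      refine isClosed_iInter fun n => IsClosed.union ?_ ?_
      · exact (hIopen n).preimage continuous_snd |>.isClosed_compl
      · exact isClosed_le continuous_const continuous_fst
    have : S = {q : ℝ × ℝ | 1 ≤ q.1} ∩ ({q | q.1 ≤ 2} ∩ ({q | 0 ≤ q.2} ∩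
        ({q | q.2 ≤ 1} ∩ {q | ∀ n : ℕ, q.2 ∈ I n → 1 + (2 : ℝ)^(-(n : ℤ) + 1) ≤ q.1}))) := by
      ext q; simp only [hS, Set.mem_setOf_eq, Set.mem_inter_iff]
    rw [this]
    exact h1.inter (h2.inter (h3.inter (h4.inter h5)))
  have hScompact : IsCompact S := by
    refine IsCompact.of_isClosed_subset ((isCompact_Icc (a := (1:ℝ)) (b := 2)).prod
      (isCompact_Icc (a := (0:ℝ)) (b := 1))) hSclosed ?_
    rintro ⟨r, α⟩ ⟨h1, h2, h3, h4, _⟩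
    exact ⟨⟨h1, h2⟩, ⟨h3, h4⟩⟩
  have hcont : Continuous (fun q : ℝ × ℝ => vec (q.1 * cos q.2) (q.1 * sin q.2)) := by
    apply (PiLp.continuous_toLp (p := 2) (β := fun _ : Fin 2 => ℝ)).comp
    refine continuous_pi fun i => ?_
    fin_cases i
    · have h : Continuous fun q : ℝ × ℝ => q.1 * cos q.2 :=
        continuous_fst.mul (Real.continuous_cos.comp continuous_snd)
      simpa using h
    · have h : Continuous fun q : ℝ × ℝ => q.1 * sin q.2 :=
        continuous_fst.mul (Real.continuous_sin.comp continuous_snd)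
      simpa using h
  have hKeq : K = (fun q : ℝ × ℝ => vec (q.1 * cos q.2) (q.1 * sin q.2)) '' S := by
    ext p
    constructor
    · rintro ⟨r, α, h1, h2, h3, h4, h5, rfl⟩
      exact ⟨(r, α), ⟨h1, h2, h3, h4, h5⟩, rfl⟩
    · rintro ⟨⟨r, α⟩, ⟨h1, h2, h3, h4, h5⟩, rfl⟩
      exact ⟨r, α, h1, h2, h3, h4, h5, rfl⟩
  have hKclosed : IsClosed K := by
    rw [hKeq]; exact (hScompact.image hcont).isClosed
  -- distance formula
  have hdist : ∀ r α : ℝ, 0 ≤ r →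
      dist (0 : EuclideanSpace ℝ (Fin 2)) (vec (r * cos α) (r * sin α)) = r :=
    fun r α hr => dist_vec_aux r α hr
  -- a base point
  obtain ⟨α0, hα0⟩ := hA
  have hα0A : α0 ∈ A := hα0
  have hα0I : ∀ n, α0 ∉ I n := fun n hn => hα0.2 (Set.mem_iUnion.2 ⟨n, hn⟩)
  have hp0 : vec (cos α0) (sin α0) ∈ K := by
    refine ⟨1, α0, le_refl 1, one_le_two, hα0.1.1, hα0.1.2,
      fun n hn => absurd hn (hα0I n), ?_⟩
    simp [one_mul]
  have hp0dist : dist (0 : EuclideanSpace ℝ (Fin 2)) (vec (cos α0) (sin α0)) = 1 := by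
    have := hdist 1 α0 zero_le_one
    simpa using this
  have hKne : K.Nonempty := ⟨_, hp0⟩
  have hge : ∀ p ∈ K, 1 ≤ dist (0 : EuclideanSpace ℝ (Fin 2)) p := by
    rintro p ⟨r, α, h1, h2, h3, h4, h5, rfl⟩
    rw [hdist r α (le_trans zero_le_one h1)]
    exact h1
  have hinf : Metric.infDist (0 : EuclideanSpace ℝ (Fin 2)) K = 1 := by
    apply le_antisymm
    · calc Metric.infDist (0 : EuclideanSpace ℝ (Fin 2)) K
          ≤ dist 0 (vec (cos α0) (sin α0)) := Metric.infDist_le_dist_of_mem hp0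
        _ = 1 := hp0dist
    · by_contra h
      obtain ⟨y, hy, hlt⟩ := (Metric.infDist_lt_iff hKne).1 (not_le.1 h)
      exact absurd (hge y hy) (not_le.2 hlt)
  refine ⟨hKclosed, hinf, ?_⟩
  ext p
  simp only [Set.mem_setOf_eq, Set.mem_image]
  constructor
  · rintro ⟨⟨r, α, h1, h2, h3, h4, h5, rfl⟩, hd⟩
    have hr0 : (0:ℝ) ≤ r := le_trans zero_le_one h1
    rw [hdist r α hr0] at hd
    subst hd
    refine ⟨α, ⟨⟨h3, h4⟩, ?_⟩, by simp [one_mul]⟩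
    intro hmem
    obtain ⟨n, hn⟩ := Set.mem_iUnion.1 hmem
    have := h5 n hn
    have hpos : (0:ℝ) < (2 : ℝ)^(-(n : ℤ) + 1) := by positivity
    linarith
  · rintro ⟨α, hαA, rfl⟩
    have hαI : ∀ n, α ∉ I n := fun n hn => hαA.2 (Set.mem_iUnion.2 ⟨n, hn⟩)
    refine ⟨⟨1, α, le_refl 1, one_le_two, hαA.1.1, hαA.1.2,
      fun n hn => absurd hn (hαI n), by simp [one_mul]⟩, ?_⟩
    have := hdist 1 α zero_le_one
    simpa using this
end

section
/- With K ⊆ ℝ² defined as in the Whitney-circle construction (K = {(r cos α, r sin α) : 1 ≤ r ≤ 2, 0 ≤ α ≤ 1, ∀n (α ∈ I_n → r ≥ 1 + 2^(−n+1))}, where A = [0,1] \ ⋃_n I_n is nonempty), K equals the closure of the set of its points with norm strictly greater than 1: K = closure {p ∈ K : ‖p‖ > 1}. -/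
open Real in
theorem whitney_circle_closure (I : ℕ → Set ℝ)
    (hI : ∀ n, ∃ a b : ℝ, I n = Set.Ioo a b)
    (hA : (Set.Icc (0 : ℝ) 1 \ ⋃ n, I n).Nonempty) :
    let vec : ℝ → ℝ → EuclideanSpace ℝ (Fin 2) := fun u v =>
      (WithLp.equiv 2 (Fin 2 → ℝ)).symm ![u, v]
    let K : Set (EuclideanSpace ℝ (Fin 2)) :=
      {p | ∃ r α : ℝ, 1 ≤ r ∧ r ≤ 2 ∧ 0 ≤ α ∧ α ≤ 1 ∧
        (∀ n : ℕ, α ∈ I n → 1 + (2 : ℝ)^(-(n : ℤ) + 1) ≤ r) ∧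
        p = vec (r * cos α) (r * sin α)}
    K = closure {p | p ∈ K ∧ 1 < ‖p‖} := by
  intro vec K
  -- norm computation
  have hnorm : ∀ (r α : ℝ), 0 ≤ r → ‖vec (r * cos α) (r * sin α)‖ = r := by
    intro r α hr
    have h1 : ‖vec (r * cos α) (r * sin α)‖ =
        Real.sqrt ((r * cos α) ^ 2 + (r * sin α) ^ 2) := by
      simp [vec, EuclideanSpace.norm_eq, Fin.sum_univ_two, sq_abs]
    have h2 : (r * cos α) ^ 2 + (r * sin α) ^ 2 = r ^ 2 := by
      have := sin_sq_add_cos_sq α; nlinarith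
    rw [h1, h2, Real.sqrt_sq hr]
  -- continuity of the parametrization
  have hcont : Continuous fun q : ℝ × ℝ => vec (q.1 * cos q.2) (q.1 * sin q.2) := by
    apply (PiLp.continuous_toLp 2 fun _ : Fin 2 => ℝ).comp
    apply continuous_pi
    intro i
    fin_cases i <;> simp <;> fun_prop
  -- K is closed
  have hKclosed : IsClosed K := by
    set C : Set (ℝ × ℝ) :=
      (Set.Icc (1:ℝ) 2 ×ˢ Set.Icc (0:ℝ) 1) ∩
        ⋂ n : ℕ, {q : ℝ × ℝ | q.2 ∈ I n → 1 + (2 : ℝ)^(-(n : ℤ) + 1) ≤ q.1} with hC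
    have hCcl : IsClosed C := by
      apply IsClosed.inter ((isClosed_Icc).prod isClosed_Icc)
      apply isClosed_iInter
      intro n
      obtain ⟨a, b, hab⟩ := hI n
      have hopen : IsOpen {q : ℝ × ℝ | q.2 ∈ I n ∧ q.1 < 1 + (2 : ℝ)^(-(n : ℤ) + 1)} := by
        apply IsOpen.inter
        · exact (hab ▸ isOpen_Ioo).preimage continuous_snd
        · exact isOpen_lt continuous_fst continuous_const
      have heq : {q : ℝ × ℝ | q.2 ∈ I n → 1 + (2 : ℝ)^(-(n : ℤ) + 1) ≤ q.1} =
          {q : ℝ × ℝ | q.2 ∈ I n ∧ q.1 < 1 + (2 : ℝ)^(-(n : ℤ) + 1)}ᶜ := by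
        ext q; simp only [Set.mem_setOf_eq, Set.mem_compl_iff, not_and, not_lt]
      rw [heq]
      exact hopen.isClosed_compl
    have hCcpt : IsCompact C :=
      (isCompact_Icc.prod isCompact_Icc).of_isClosed_subset hCcl Set.inter_subset_left
    have hKim : K = (fun q : ℝ × ℝ => vec (q.1 * cos q.2) (q.1 * sin q.2)) '' C := by
      ext p
      constructor
      · rintro ⟨r, α, h1, h2, h3, h4, h5, rfl⟩
        exact ⟨(r, α), ⟨⟨⟨h1, h2⟩, ⟨h3, h4⟩⟩, Set.mem_iInter.2 fun n => h5 n⟩, rfl⟩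
      · rintro ⟨⟨r, α⟩, ⟨⟨⟨h1, h2⟩, ⟨h3, h4⟩⟩, hmem⟩, rfl⟩
        exact ⟨r, α, h1, h2, h3, h4, fun n hn => Set.mem_iInter.1 hmem n hn, rfl⟩
    rw [hKim]
    exact (hCcpt.image hcont).isClosed
  apply Set.Subset.antisymm
  · -- K ⊆ closure of the r>1 part
    rintro p ⟨r, α, h1, h2, h3, h4, h5, rfl⟩
    rcases eq_or_lt_of_le h1 with hr1 | hr1
    · -- r = 1 : no interval constraint applies; approximate from outside
      subst hr1
      have hnotI : ∀ n, α ∉ I n := by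
        intro n hn
        have := h5 n hn
        have hpow : (0:ℝ) < (2 : ℝ)^(-(n : ℤ) + 1) := zpow_pos (by norm_num) _
        linarith
      have htend : Filter.Tendsto (fun k : ℕ => (1 + 1 / ((k : ℝ) + 1)))
          Filter.atTop (nhds 1) := by
        have := tendsto_one_div_add_atTop_nhds_zero_nat (𝕜 := ℝ)
        have h := this.const_add (1 : ℝ)
        simpa using h
      have hcont2 : Continuous fun t : ℝ => vec (t * cos α) (t * sin α) :=
        hcont.comp (Continuous.prodMk_left α)
      apply mem_closure_of_tendsto ((hcont2.tendsto 1).comp htend)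
      filter_upwards [] with k
      simp only [Function.comp_apply]
      refine ⟨⟨1 + 1 / ((k : ℝ) + 1), α, ?_, ?_, h3, h4, ?_, rfl⟩, ?_⟩
      · have : (0:ℝ) < 1 / ((k : ℝ) + 1) := by positivity
        linarith
      · have : 1 / ((k : ℝ) + 1) ≤ 1 := by
          rw [div_le_one (by positivity)]; linarith [Nat.cast_nonneg (α := ℝ) k]
        linarith
      · intro n hn; exact absurd hn (hnotI n)
      · rw [hnorm _ _ (by positivity)]
        have : (0:ℝ) < 1 / ((k : ℝ) + 1) := by positivity
        linarith
    · exact subset_closure ⟨⟨r, α, h1, h2, h3, h4, h5, rfl⟩,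
        by rw [hnorm _ _ (by linarith)]; exact hr1⟩
  · exact closure_minimal (fun p hp => hp.1) hKclosed
end
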